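/- Let λ, μ > 0 and fix k ∈ ℤ. For every n ∈ ℤ the function t ↦ p_{k,n}(t;λ,μ) is differentiable on [0,∞), the initial condition p_{k,n}(0;λ,μ) = δ_{n,k} (Kronecker delta) holds, and for every t ≥ 0 and every n ∈ ℤ the Kolmogorov forward equations hold: (d/dt) p_{k,2n}(t;λ,μ) = μ·p_{k,2n−1}(t;λ,μ) − 2λ·p_{k,2n}(t;λ,μ) + μ·p_{k,2n+1}(t;λ,μ) and (d/dt) p_{k,2n+1}(t;λ,μ) = λ·p_{k,2n}(t;λ,μ) − 2μ·p_{k,2n+1}(t;λ,μ) + λ·p_{k,2n+2}(t;λ,μ). -/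

import Mathlib

open scoped BigOperators

/-- Inner binomial sum `∑_{k=0}^{n-m} C(n,k) C(n,k+m) ρ^{-2k-m}`. -/
noncomputable def innerSum (ρ : ℝ) (m n : ℕ) : ℝ :=
  ∑ k ∈ Finset.range (n - m + 1),
    (n.choose k : ℝ) * (n.choose (k + m) : ℝ) * ρ ^ (-(2 * (k : ℤ) + (m : ℤ)))

/-- Series `∑_{n≥m} [x^{2n}/(2n)! + c·x^{2n+1}/(2n+1)!]·innerSum ρ m n`. -/
noncomputable def evenSeries (x c ρ : ℝ) (m : ℕ) : ℝ :=
  ∑' j : ℕ,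
    ((x ^ (2 * (m + j)) / (2 * (m + j)).factorial) +
      c * (x ^ (2 * (m + j) + 1) / (2 * (m + j) + 1).factorial)) * innerSum ρ m (m + j)

/-- Series `∑_{n≥m} x^{2n+1}/(2n+1)!·innerSum ρ m n`. -/
noncomputable def oddSeries (x ρ : ℝ) (m : ℕ) : ℝ :=
  ∑' j : ℕ,
    (x ^ (2 * (m + j) + 1) / (2 * (m + j) + 1).factorial) * innerSum ρ m (m + j)

/-- `p_{2l,2r}(t;λ,μ)`. -/
noncomputable def pEE (lam mu t : ℝ) (l r : ℤ) : ℝ :=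
  Real.exp (-(lam + mu) * t) *
    evenSeries (lam * t) ((mu - lam) / lam) (lam / mu) (r - l).natAbs

/-- `p_{2l,2r+1}(t;λ,μ)`. -/
noncomputable def pEO (lam mu t : ℝ) (l r : ℤ) : ℝ :=
  Real.exp (-(lam + mu) * t) *
    (oddSeries (lam * t) (lam / mu) (r - l).natAbs +
      oddSeries (lam * t) (lam / mu) (r - l + 1).natAbs)

/-- `p_{2l+1,2r}(t;λ,μ)`. -/
noncomputable def pOE (lam mu t : ℝ) (l r : ℤ) : ℝ :=
  Real.exp (-(lam + mu) * t) *
    (oddSeries (mu * t) (mu / lam) (r - l - 1).natAbs +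
      oddSeries (mu * t) (mu / lam) (r - l).natAbs)

/-- `p_{2l+1,2r+1}(t;λ,μ)`. -/
noncomputable def pOO (lam mu t : ℝ) (l r : ℤ) : ℝ :=
  Real.exp (-(lam + mu) * t) *
    evenSeries (mu * t) ((lam - mu) / mu) (mu / lam) (r - l).natAbs

/-- Transition probability `p_{k,n}(t;λ,μ)`, by parity of the states. -/
noncomputable def transP (lam mu t : ℝ) (k n : ℤ) : ℝ :=
  if k % 2 = 0 then
    if n % 2 = 0 then pEE lam mu t (k / 2) (n / 2)
    else pEO lam mu t (k / 2) ((n - 1) / 2)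
  else
    if n % 2 = 0 then pOE lam mu t ((k - 1) / 2) (n / 2)
    else pOO lam mu t ((k - 1) / 2) ((n - 1) / 2)

/-- `h(z) = √((μz²+λ)(λz²+μ))`. -/
noncomputable def hFun (lam mu z : ℝ) : ℝ := Real.sqrt ((mu * z ^ 2 + lam) * (lam * z ^ 2 + mu))




/-- Full-range form with positive powers of `q = ρ⁻¹`. -/
noncomputable def U (q : ℝ) (m n : ℕ) : ℝ :=
  ∑ k ∈ Finset.range (n + 1), (n.choose k : ℝ) * (n.choose (k + m) : ℝ) * q ^ (2 * k + m)

lemma innerSum_eq_U (ρ : ℝ) (m n : ℕ) : innerSum ρ m n = U ρ⁻¹ m n := by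
  unfold innerSum U
  have hterm : ∀ k : ℕ, ρ ^ (-(2 * (k : ℤ) + (m : ℤ))) = ρ⁻¹ ^ (2 * k + m) := by
    intro k
    rw [show -(2 * (k : ℤ) + (m : ℤ)) = -((2 * k + m : ℕ) : ℤ) by push_cast; ring,
      zpow_neg, zpow_natCast, inv_pow]
  rw [Finset.sum_subset (show Finset.range (n - m + 1) ⊆ Finset.range (n + 1) from Finset.range_subset_range.2 (by omega))]
  · exact Finset.sum_congr rfl fun k _ => by rw [hterm]
  · intro k hk hk2
    simp only [Finset.mem_range] at hk hk2
    have : n < k + m := by omega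
    simp [Nat.choose_eq_zero_of_lt this]

lemma U_eq_zero {q : ℝ} {m n : ℕ} (h : n < m) : U q m n = 0 := by
  unfold U
  refine Finset.sum_eq_zero fun k _ => ?_
  have : n < k + m := by omega
  simp [Nat.choose_eq_zero_of_lt this]

lemma U_nonneg {q : ℝ} (hq : 0 ≤ q) (m n : ℕ) : 0 ≤ U q m n := by
  unfold U
  exact Finset.sum_nonneg fun k _ => by positivity

lemma choose_mul_pow_le {q : ℝ} (hq : 0 ≤ q) (n j : ℕ) :
    (n.choose j : ℝ) * q ^ j ≤ (1 + q) ^ n := by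
  rcases le_or_gt j n with hj | hj
  · have h := add_pow q 1 n
    have : (1 + q) ^ n = ∑ k ∈ Finset.range (n + 1),
        (n.choose k : ℝ) * q ^ k := by
      rw [add_comm, h]
      exact Finset.sum_congr rfl fun k _ => by ring
    rw [this]
    refine Finset.single_le_sum (f := fun k => (n.choose k : ℝ) * q ^ k)
      (fun k _ => by positivity) (Finset.mem_range.2 (by omega))
  · simp [Nat.choose_eq_zero_of_lt hj]
    positivity

lemma U_le {q : ℝ} (hq : 0 ≤ q) (m n : ℕ) : U q m n ≤ (1 + q) ^ (2 * n) := by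
  unfold U
  have h1 : ∀ k ∈ Finset.range (n + 1),
      (n.choose k : ℝ) * (n.choose (k + m) : ℝ) * q ^ (2 * k + m)
        ≤ ((n.choose k : ℝ) * q ^ k) * (1 + q) ^ n := by
    intro k _
    have : (n.choose k : ℝ) * (n.choose (k + m) : ℝ) * q ^ (2 * k + m)
        = ((n.choose k : ℝ) * q ^ k) * ((n.choose (k + m) : ℝ) * q ^ (k + m)) := by
      rw [show 2 * k + m = k + (k + m) by omega, pow_add]; ring
    rw [this]
    have hc := choose_mul_pow_le hq n (k + m)
    have h0 : 0 ≤ (n.choose k : ℝ) * q ^ k := by positivity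
    exact mul_le_mul_of_nonneg_left hc h0
  calc ∑ k ∈ Finset.range (n + 1), (n.choose k : ℝ) * (n.choose (k + m) : ℝ) * q ^ (2 * k + m)
      ≤ ∑ k ∈ Finset.range (n + 1), ((n.choose k : ℝ) * q ^ k) * (1 + q) ^ n :=
        Finset.sum_le_sum h1
    _ = (∑ k ∈ Finset.range (n + 1), (n.choose k : ℝ) * q ^ k) * (1 + q) ^ n := by
        rw [Finset.sum_mul]
    _ ≤ (1 + q) ^ n * (1 + q) ^ n := by
        refine mul_le_mul_of_nonneg_right ?_ (by positivity)
        rw [show (1 + q) ^ n = ∑ k ∈ Finset.range (n + 1), (n.choose k : ℝ) * q ^ k by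
          rw [add_comm, add_pow q 1 n]; exact Finset.sum_congr rfl fun k _ => by ring]
    _ = (1 + q) ^ (2 * n) := by rw [← pow_add]; ring_nf



lemma U_rec_succ (q : ℝ) (m j : ℕ) :
    U q (m+1) (j+1) = (1 + q^2) * U q (m+1) j + q * (U q m j + U q (m+2) j) := by
  have hLHS : U q (m+1) (j+1) =
      (∑ k ∈ Finset.range (j+1),
        ((j.choose k : ℝ) + j.choose (k+1)) * ((j.choose (k+m+1) : ℝ) + j.choose (k+m+2))
          * q ^ (2*k+m+3))
      + ((j.choose m : ℝ) + j.choose (m+1)) * q ^ (m+1) := by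
    unfold U
    rw [Finset.sum_range_succ']
    congr 1
    · refine Finset.sum_congr rfl fun k _ => ?_
      have h1 : (j+1).choose (k+1) = j.choose k + j.choose (k+1) := Nat.choose_succ_succ j k
      have h2 : (j+1).choose (k+1+(m+1)) = j.choose (k+m+1) + j.choose (k+m+2) := by
        rw [show k+1+(m+1) = (k+m+1)+1 by omega]
        exact Nat.choose_succ_succ j (k+m+1)
      rw [h1, h2]
      push_cast
      ring
    · have h3 : (j+1).choose (0+(m+1)) = j.choose m + j.choose (m+1) := by
        rw [show (0:ℕ)+(m+1) = m+1 by omega]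
        exact Nat.choose_succ_succ j m
      rw [h3, Nat.choose_zero_right]
      push_cast
      ring
  have hB : q^2 * U q (m+1) j
      = ∑ k ∈ Finset.range (j+1), (j.choose k : ℝ) * (j.choose (k+m+1) : ℝ) * q ^ (2*k+m+3) := by
    unfold U
    rw [Finset.mul_sum]
    exact Finset.sum_congr rfl fun k _ => by rw [show k+(m+1) = k+m+1 by omega]; ring
  have hD : q * U q (m+2) j
      = ∑ k ∈ Finset.range (j+1), (j.choose k : ℝ) * (j.choose (k+m+2) : ℝ) * q ^ (2*k+m+3) := by
    unfold U
    rw [Finset.mul_sum]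
    exact Finset.sum_congr rfl fun k _ => by rw [show k+(m+2) = k+m+2 by omega]; ring
  have hA : U q (m+1) j
      = (∑ k ∈ Finset.range (j+1), (j.choose (k+1) : ℝ) * (j.choose (k+m+2) : ℝ) * q ^ (2*k+m+3))
        + (j.choose (m+1) : ℝ) * q ^ (m+1) := by
    unfold U
    rw [Finset.sum_range_succ']
    congr 1
    · rw [Finset.sum_range_succ, Nat.choose_succ_self]
      push_cast
      simp only [Nat.cast_zero, zero_mul, mul_zero, add_zero]
      exact Finset.sum_congr rfl fun k _ => by
        rw [show k+1+(m+1) = k+m+2 by omega]; ring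
    · rw [show (0:ℕ)+(m+1) = m+1 by omega, Nat.choose_zero_right]
      push_cast; ring
  have hC : q * U q m j
      = (∑ k ∈ Finset.range (j+1), (j.choose (k+1) : ℝ) * (j.choose (k+m+1) : ℝ) * q ^ (2*k+m+3))
        + (j.choose m : ℝ) * q ^ (m+1) := by
    unfold U
    rw [Finset.mul_sum, Finset.sum_range_succ']
    congr 1
    · rw [Finset.sum_range_succ, Nat.choose_succ_self]
      push_cast
      simp only [Nat.cast_zero, zero_mul, mul_zero, add_zero]
      exact Finset.sum_congr rfl fun k _ => by
        rw [show k+1+m = k+m+1 by omega]; ring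
    · rw [show (0:ℕ)+m = m by omega, Nat.choose_zero_right]
      push_cast; ring
  rw [hLHS, show (1 + q^2) * U q (m+1) j + q * (U q m j + U q (m+2) j)
      = U q (m+1) j + q^2 * U q (m+1) j + (q * U q m j + q * U q (m+2) j) by ring,
    hB, hC, hD, hA]
  rw [show ∀ (A B C D c1 c0 : ℝ), (A + c1) + B + ((C + c0) + D) = (B + D + C + A) + (c0 + c1)
    from fun _ _ _ _ _ _ => by ring]
  congr 1
  · rw [← Finset.sum_add_distrib, ← Finset.sum_add_distrib, ← Finset.sum_add_distrib]
    exact Finset.sum_congr rfl fun k _ => by ring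
  · ring

lemma U_rec_zero (q : ℝ) (j : ℕ) :
    U q 0 (j+1) = (1 + q^2) * U q 0 j + 2 * q * U q 1 j := by
  have hLHS : U q 0 (j+1) =
      (∑ k ∈ Finset.range (j+1),
        ((j.choose k : ℝ) + j.choose (k+1)) * ((j.choose k : ℝ) + j.choose (k+1)) * q ^ (2*k+2))
      + 1 := by
    unfold U
    rw [Finset.sum_range_succ']
    congr 1
    · refine Finset.sum_congr rfl fun k _ => ?_
      have h1 : (j+1).choose (k+1) = j.choose k + j.choose (k+1) := Nat.choose_succ_succ j k
      rw [show k+1+0 = k+1 by omega, h1]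
      push_cast
      ring
    · simp
  have hB : q^2 * U q 0 j
      = ∑ k ∈ Finset.range (j+1), (j.choose k : ℝ) * (j.choose k : ℝ) * q ^ (2*k+2) := by
    unfold U
    rw [Finset.mul_sum]
    exact Finset.sum_congr rfl fun k _ => by rw [show k+0 = k by omega]; ring
  have hX : 2 * q * U q 1 j
      = ∑ k ∈ Finset.range (j+1), 2 * ((j.choose k : ℝ) * (j.choose (k+1) : ℝ)) * q ^ (2*k+2) := by
    unfold U
    rw [Finset.mul_sum]
    exact Finset.sum_congr rfl fun k _ => by ring
  have hA : U q 0 j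
      = (∑ k ∈ Finset.range (j+1), (j.choose (k+1) : ℝ) * (j.choose (k+1) : ℝ) * q ^ (2*k+2))
        + 1 := by
    unfold U
    rw [Finset.sum_range_succ']
    congr 1
    · rw [Finset.sum_range_succ, Nat.choose_succ_self]
      push_cast
      simp only [Nat.cast_zero, zero_mul, mul_zero, add_zero]
      exact Finset.sum_congr rfl fun k _ => by
        rw [show k+1+0 = k+1 by omega]; ring
    · simp
  rw [hLHS, show (1 + q^2) * U q 0 j + 2 * q * U q 1 j
      = U q 0 j + q^2 * U q 0 j + 2 * q * U q 1 j by ring, hB, hX, hA]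
  rw [show ∀ (A B C c : ℝ), (A + c) + B + C = (B + C + A) + c from fun _ _ _ _ => by ring]
  congr 1
  rw [← Finset.sum_add_distrib, ← Finset.sum_add_distrib]
  exact Finset.sum_congr rfl fun k _ => by ring


noncomputable def psum (a : ℕ → ℝ) (t : ℝ) : ℝ := ∑' i, a i * t ^ i / i.factorial

lemma summable_psum {a : ℕ → ℝ} {C R : ℝ} (h : ∀ n, |a n| ≤ C * R ^ n) (t : ℝ) :
    Summable (fun i => a i * t ^ i / i.factorial) := by
  refine Summable.of_norm_bounded
    ((Real.summable_pow_div_factorial (R * |t|)).mul_left C) fun i => ?_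
  show ‖a i * t ^ i / i.factorial‖ ≤ C * ((R * |t|) ^ i / i.factorial)
  have h0 : 0 ≤ C * R ^ i := le_trans (abs_nonneg _) (h i)
  rw [Real.norm_eq_abs, abs_div, abs_mul, abs_pow, Nat.abs_cast]
  calc |a i| * |t| ^ i / i.factorial ≤ (C * R ^ i) * |t| ^ i / i.factorial := by
        gcongr
        exact h i
    _ = C * ((R * |t|) ^ i / i.factorial) := by rw [mul_pow]; ring

lemma psum_zero (a : ℕ → ℝ) : psum a 0 = a 0 := by
  unfold psum
  rw [tsum_eq_single 0 (fun i hi => by simp [zero_pow hi])]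
  simp

lemma summable_aux {x : ℝ} : Summable (fun n : ℕ => (n : ℝ) * x ^ n / n.factorial) := by
  rw [← summable_nat_add_iff 1]
  have : (fun n : ℕ => ((n + 1 : ℕ) : ℝ) * x ^ (n + 1) / (n + 1).factorial)
      = fun n : ℕ => x * (x ^ n / n.factorial) := by
    funext n
    rw [Nat.factorial_succ]
    push_cast
    rw [pow_succ]
    have hn : ((n.factorial : ℝ)) ≠ 0 := by positivity
    field_simp
  rw [this]
  exact (Real.summable_pow_div_factorial x).mul_left x

lemma hasDerivAt_psum {a : ℕ → ℝ} {C R : ℝ} (hR : 0 ≤ R) (h : ∀ n, |a n| ≤ C * R ^ n)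
    (t : ℝ) : HasDerivAt (psum a) (psum (fun n => a (n + 1)) t) t := by
  have hC : 0 ≤ C := by
    have := le_trans (abs_nonneg _) (h 0); simpa using this
  set M : ℝ := |t| + 2 with hM
  have hM0 : 0 < M := by positivity
  set φ : ℝ → ℝ := fun x => t + Real.arctan x with hφdef
  have hφbound : ∀ x, |φ x| ≤ M := by
    intro x
    have h1 : |Real.arctan x| ≤ Real.pi / 2 :=
      le_of_lt (abs_lt.2 ⟨Real.neg_pi_div_two_lt_arctan x, Real.arctan_lt_pi_div_two x⟩)
    have h2 : Real.pi / 2 ≤ 2 := by linarith [Real.pi_le_four]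
    calc |φ x| ≤ |t| + |Real.arctan x| := abs_add_le _ _
      _ ≤ |t| + 2 := by linarith
  have hφderiv : ∀ x, HasDerivAt φ (1 / (1 + x ^ 2)) x := fun x =>
    (Real.hasDerivAt_arctan x).const_add t
  set f : ℕ → ℝ → ℝ := fun n x => a n * (φ x) ^ n / n.factorial with hfdef
  set f' : ℕ → ℝ → ℝ := fun n x =>
    a n * ((n : ℝ) * (φ x) ^ (n - 1) * (1 / (1 + x ^ 2))) / n.factorial with hf'def
  have hf : ∀ n x, HasDerivAt (f n) (f' n x) x := by
    intro n x
    exact (((hφderiv x).pow n).const_mul (a n)).div_const _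
  set u : ℕ → ℝ := fun n => (C / M) * ((n : ℝ) * (R * M) ^ n / n.factorial) with hu
  have husum : Summable u := (summable_aux (x := R * M)).mul_left _
  have hf'le : ∀ n x, ‖f' n x‖ ≤ u n := by
    intro n x
    rw [Real.norm_eq_abs]
    have h1 : 0 < 1 + x ^ 2 := by positivity
    have h2 : |1 / (1 + x ^ 2)| ≤ 1 := by
      rw [abs_div, abs_one, abs_of_pos h1, div_le_one h1]; nlinarith
    have h3 : |(φ x) ^ (n - 1)| ≤ M ^ (n - 1) := by
      rw [abs_pow]
      exact pow_le_pow_left₀ (abs_nonneg _) (hφbound x) _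
    have h4 : |a n| * ((n : ℝ) * M ^ (n - 1)) ≤ (C / M) * ((n : ℝ) * (R * M) ^ n) := by
      rcases Nat.eq_zero_or_pos n with hn | hn
      · subst hn; simp
      · have hMn : M ^ n = M ^ (n - 1) * M := by
          rw [← pow_succ]; congr 1; omega
        have hRHS : (C / M) * ((n : ℝ) * (R * M) ^ n)
            = (C * R ^ n) * ((n : ℝ) * M ^ (n - 1)) := by
          rw [mul_pow, hMn]
          field_simp
        rw [hRHS]
        exact mul_le_mul_of_nonneg_right (h n) (by positivity)
    calc |a n * ((n : ℝ) * (φ x) ^ (n - 1) * (1 / (1 + x ^ 2))) / n.factorial|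
        = |a n| * ((n : ℝ) * |(φ x) ^ (n - 1)| * |1 / (1 + x ^ 2)|) / n.factorial := by
          rw [abs_div, abs_mul, abs_mul, abs_mul, Nat.abs_cast, Nat.abs_cast]
      _ ≤ |a n| * ((n : ℝ) * M ^ (n - 1) * 1) / n.factorial := by
          apply div_le_div_of_nonneg_right ?_ (by positivity)
          · apply mul_le_mul_of_nonneg_left ?_ (abs_nonneg _)
            have hn0 : (0:ℝ) ≤ n := Nat.cast_nonneg n
            apply mul_le_mul (mul_le_mul_of_nonneg_left h3 hn0) h2 (abs_nonneg _)
            positivity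
      _ = |a n| * ((n : ℝ) * M ^ (n - 1)) / n.factorial := by ring_nf
      _ ≤ (C / M) * ((n : ℝ) * (R * M) ^ n) / n.factorial := by
          apply div_le_div_of_nonneg_right h4 (by positivity)
      _ = u n := by rw [hu]; ring
  have hf0 : Summable fun n => f n 0 := by
    have := summable_psum h (φ 0)
    simpa [hfdef] using this
  have hmain := hasDerivAt_tsum husum hf hf'le hf0 0
  have hφ0 : φ 0 = t := by simp [hφdef]
  have hsum_eq : (∑' n, f' n 0) = psum (fun n => a (n + 1)) t := by
    have hsumf' : Summable (fun n => f' n 0) :=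
      Summable.of_norm_bounded husum fun n => hf'le n 0
    rw [Summable.tsum_eq_zero_add hsumf']
    have hz : f' 0 0 = 0 := by simp [hf'def]
    rw [hz, zero_add]
    unfold psum
    refine tsum_congr fun n => ?_
    rw [hf'def]
    simp only [hφ0, Nat.add_sub_cancel]
    norm_num
    rw [Nat.factorial_succ]
    have hne : ((n.factorial : ℝ)) ≠ 0 := by positivity
    push_cast
    have hne2 : ((n : ℝ) + 1) ≠ 0 := by positivity
    field_simp
  have hG : HasDerivAt (fun x => psum a (φ x)) (psum (fun n => a (n + 1)) t) 0 := by
    have hfun : (fun x => psum a (φ x)) = fun x => ∑' n, f n x := by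
      funext x; unfold psum; rfl
    rw [hfun, ← hsum_eq]
    exact hmain
  set ψ : ℝ → ℝ := fun y => Real.tan (y - t) with hψdef
  have hψt : ψ t = 0 := by simp [hψdef]
  have hψderiv : HasDerivAt ψ 1 t := by
    have h1 : HasDerivAt (fun y : ℝ => y - t) 1 t := (hasDerivAt_id t).sub_const t
    have h2 : HasDerivAt Real.tan (1 / Real.cos (t - t) ^ 2) (t - t) := by
      apply Real.hasDerivAt_tan
      simp
    have h3 := HasDerivAt.comp (𝕜 := ℝ) (𝕜' := ℝ) (h₂ := Real.tan) (h := fun y : ℝ => y - t) t h2 h1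
    simp only [sub_self, Real.cos_zero, one_pow, Function.comp] at h3
    norm_num at h3
    exact h3
  have hcomp : HasDerivAt (fun y => psum a (φ (ψ y))) (psum (fun n => a (n + 1)) t) t := by
    have hG' : HasDerivAt (fun x => psum a (φ x)) (psum (fun n => a (n + 1)) t) (ψ t) := by
      rw [hψt]; exact hG
    have := hG'.comp t hψderiv
    rw [mul_one] at this
    exact this
  refine HasDerivAt.congr_of_eventuallyEq hcomp ?_
  have hπ : 0 < Real.pi / 2 := by positivity
  filter_upwards [Ioo_mem_nhds (by linarith : t - Real.pi / 2 < t)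
    (by linarith : t < t + Real.pi / 2)] with y hy
  have h1 : -(Real.pi / 2) < y - t := by
    rcases hy with ⟨hy1, hy2⟩; linarith
  have h2 : y - t < Real.pi / 2 := by
    rcases hy with ⟨hy1, hy2⟩; linarith
  have : φ (ψ y) = y := by
    simp only [hφdef, hψdef]
    rw [Real.arctan_tan h1 h2]
    ring
  rw [this]

/-! ### Coefficients -/

noncomputable def cE (lam mu : ℝ) (m i : ℕ) : ℝ :=
  if i % 2 = 0 then lam ^ i * U (mu / lam) m (i / 2)
  else (mu - lam) * lam ^ (i - 1) * U (mu / lam) m (i / 2)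

noncomputable def cO (lam mu : ℝ) (m i : ℕ) : ℝ :=
  if i % 2 = 0 then 0 else lam ^ i * U (mu / lam) m (i / 2)

lemma cE_even {lam mu : ℝ} {m i : ℕ} (h : i % 2 = 0) :
    cE lam mu m i = lam ^ i * U (mu / lam) m (i / 2) := if_pos h

lemma cE_odd {lam mu : ℝ} {m i : ℕ} (h : i % 2 = 1) :
    cE lam mu m i = (mu - lam) * lam ^ (i - 1) * U (mu / lam) m (i / 2) := if_neg (by omega)

lemma cO_even {lam mu : ℝ} {m i : ℕ} (h : i % 2 = 0) : cO lam mu m i = 0 := if_pos h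

lemma cO_odd {lam mu : ℝ} {m i : ℕ} (h : i % 2 = 1) :
    cO lam mu m i = lam ^ i * U (mu / lam) m (i / 2) := if_neg (by omega)

lemma cE_bound {lam mu : ℝ} (hlam : 0 < lam) (hmu : 0 < mu) (m i : ℕ) :
    |cE lam mu m i| ≤ (lam + mu) ^ i := by
  have hq : (0:ℝ) ≤ mu / lam := by positivity
  have hkey : lam * (1 + mu / lam) = lam + mu := by field_simp
  have hU0 : 0 ≤ U (mu / lam) m (i / 2) := U_nonneg hq m (i / 2)
  by_cases hi : i % 2 = 0
  · rw [cE_even hi]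
    have hUle : U (mu / lam) m (i / 2) ≤ (1 + mu / lam) ^ i := by
      have := U_le hq m (i / 2)
      rwa [show 2 * (i / 2) = i by omega] at this
    rw [abs_of_nonneg (by positivity)]
    calc lam ^ i * U (mu / lam) m (i / 2) ≤ lam ^ i * (1 + mu / lam) ^ i :=
          mul_le_mul_of_nonneg_left hUle (by positivity)
      _ = (lam * (1 + mu / lam)) ^ i := (mul_pow _ _ _).symm
      _ = (lam + mu) ^ i := by rw [hkey]
  · rw [cE_odd (by omega)]
    have hUle : U (mu / lam) m (i / 2) ≤ (1 + mu / lam) ^ (i - 1) := by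
      have := U_le hq m (i / 2)
      rwa [show 2 * (i / 2) = i - 1 by omega] at this
    have h1 : |mu - lam| ≤ lam + mu := abs_le.2 ⟨by linarith, by linarith⟩
    have habs : |(mu - lam) * lam ^ (i - 1) * U (mu / lam) m (i / 2)|
        = |mu - lam| * (lam ^ (i - 1) * U (mu / lam) m (i / 2)) := by
      rw [abs_mul, abs_mul, abs_of_nonneg (by positivity : (0:ℝ) ≤ lam ^ (i-1)),
        abs_of_nonneg hU0, mul_assoc]
    rw [habs]
    calc |mu - lam| * (lam ^ (i - 1) * U (mu / lam) m (i / 2))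
        ≤ (lam + mu) * (lam ^ (i - 1) * (1 + mu / lam) ^ (i - 1)) := by
          apply mul_le_mul h1 (mul_le_mul_of_nonneg_left hUle (by positivity))
            (by positivity) (by positivity)
      _ = (lam + mu) * (lam + mu) ^ (i - 1) := by rw [← mul_pow, hkey]
      _ = (lam + mu) ^ i := by rw [← pow_succ']; congr 1; omega

lemma cO_bound {lam mu : ℝ} (hlam : 0 < lam) (hmu : 0 < mu) (m i : ℕ) :
    |cO lam mu m i| ≤ (lam + mu) ^ i := by
  have hq : (0:ℝ) ≤ mu / lam := by positivity
  have hkey : lam * (1 + mu / lam) = lam + mu := by field_simp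
  have hU0 : 0 ≤ U (mu / lam) m (i / 2) := U_nonneg hq m (i / 2)
  by_cases hi : i % 2 = 0
  · rw [cO_even hi]
    simp only [abs_zero]
    positivity
  · rw [cO_odd (by omega)]
    have hUle : U (mu / lam) m (i / 2) ≤ (1 + mu / lam) ^ i := by
      have h2 := U_le hq m (i / 2)
      rw [show 2 * (i / 2) = i - 1 by omega] at h2
      exact le_trans h2 (pow_le_pow_right₀ (by linarith) (by omega))
    rw [abs_of_nonneg (by positivity)]
    calc lam ^ i * U (mu / lam) m (i / 2) ≤ lam ^ i * (1 + mu / lam) ^ i :=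
          mul_le_mul_of_nonneg_left hUle (by positivity)
      _ = (lam * (1 + mu / lam)) ^ i := (mul_pow _ _ _).symm
      _ = (lam + mu) ^ i := by rw [hkey]

/-! ### Series representations -/

lemma oddSeries_eq {lam mu : ℝ} (hlam : 0 < lam) (hmu : 0 < mu) (m : ℕ) (t : ℝ) :
    oddSeries (lam * t) (lam / mu) m = psum (cO lam mu m) t := by
  have hbound : ∀ i, |cO lam mu m i| ≤ 1 * (lam + mu) ^ i := by
    intro i; rw [one_mul]; exact cO_bound hlam hmu m i
  have hsum : Summable (fun i => cO lam mu m i * t ^ i / i.factorial) :=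
    summable_psum hbound t
  set g : ℕ → ℝ := fun i => cO lam mu m i * t ^ i / i.factorial with hg
  set h : ℕ → ℝ := fun n => lam ^ (2*n+1) * U (mu/lam) m n * t ^ (2*n+1) / (2*n+1).factorial
    with hh
  have heven : ∀ j, g (2 * j) = 0 := by
    intro j
    simp only [hg, cO_even (by omega : (2*j) % 2 = 0), zero_mul, zero_div]
  have hodd : ∀ j, g (2 * j + 1) = h j := by
    intro j
    simp only [hg, hh, cO_odd (by omega : (2*j+1) % 2 = 1),
      show (2*j+1)/2 = j by omega]
  have hsplit : psum (cO lam mu m) t = ∑' j, h j := by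
    unfold psum
    rw [← tsum_even_add_odd (Summable.congr summable_zero fun j => (heven j).symm)
      (hsum.comp_injective (fun a b hab => by dsimp only at hab; omega : Function.Injective (fun j : ℕ => 2*j+1)))]
    rw [tsum_congr heven, tsum_zero, zero_add]
    exact tsum_congr hodd
  rw [hsplit]
  have hinj : Function.Injective (fun j : ℕ => m + j) := fun a b hab => by
    dsimp only at hab; omega
  have hsupp : Function.support h ⊆ Set.range (fun j : ℕ => m + j) := by
    intro n hn
    by_contra hc
    apply hn
    have hlt : n < m := by
      by_contra hge
      exact hc ⟨n - m, by dsimp only; omega⟩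
    simp only [hh, U_eq_zero hlt, mul_zero, zero_mul, zero_div]
  rw [← hinj.tsum_eq hsupp]
  unfold oddSeries
  refine tsum_congr fun j => ?_
  have hrho : (lam / mu)⁻¹ = mu / lam := by rw [inv_div]
  rw [innerSum_eq_U, hrho]
  simp only [hh]
  rw [mul_pow]
  ring

lemma evenSeries_eq {lam mu : ℝ} (hlam : 0 < lam) (hmu : 0 < mu) (m : ℕ) (t : ℝ) :
    evenSeries (lam * t) ((mu - lam) / lam) (lam / mu) m = psum (cE lam mu m) t := by
  have hbound : ∀ i, |cE lam mu m i| ≤ 1 * (lam + mu) ^ i := by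
    intro i; rw [one_mul]; exact cE_bound hlam hmu m i
  have hsum : Summable (fun i => cE lam mu m i * t ^ i / i.factorial) :=
    summable_psum hbound t
  set g : ℕ → ℝ := fun i => cE lam mu m i * t ^ i / i.factorial with hg
  set A : ℕ → ℝ := fun n => (lam * t) ^ (2*n) / (2*n).factorial * U (mu/lam) m n with hA
  set B : ℕ → ℝ := fun n => (mu - lam) / lam * ((lam * t) ^ (2*n+1) / (2*n+1).factorial)
    * U (mu/lam) m n with hB
  have heven : ∀ j, g (2 * j) = A j := by
    intro j
    simp only [hg, hA, cE_even (by omega : (2*j) % 2 = 0), show (2*j)/2 = j by omega, mul_pow]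
    ring
  have hodd : ∀ j, g (2 * j + 1) = B j := by
    intro j
    simp only [hg, hB, cE_odd (by omega : (2*j+1) % 2 = 1), show (2*j+1)/2 = j by omega,
      Nat.add_sub_cancel, mul_pow]
    have hl : lam ≠ 0 := ne_of_gt hlam
    field_simp
    ring
  have hsumA : Summable A := by
    refine Summable.congr (hsum.comp_injective
      (fun a b hab => by dsimp only at hab; omega : Function.Injective (fun j : ℕ => 2*j))) fun j => heven j
  have hsumB : Summable B := by
    refine Summable.congr (hsum.comp_injective
      (fun a b hab => by dsimp only at hab; omega : Function.Injective (fun j : ℕ => 2*j+1))) fun j => hodd j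
  have hsplit : psum (cE lam mu m) t = (∑' j, A j) + ∑' j, B j := by
    unfold psum
    rw [← tsum_even_add_odd (Summable.congr hsumA fun j => (heven j).symm)
      (Summable.congr hsumB fun j => (hodd j).symm)]
    rw [tsum_congr heven, tsum_congr hodd]
  rw [hsplit]
  have hinj : Function.Injective (fun j : ℕ => m + j) := fun a b hab => by
    dsimp only at hab; omega
  have hAsupp : Function.support A ⊆ Set.range (fun j : ℕ => m + j) := by
    intro n hn
    by_contra hc
    apply hn
    have hlt : n < m := by
      by_contra hge
      exact hc ⟨n - m, by dsimp only; omega⟩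
    simp only [hA, U_eq_zero hlt, mul_zero]
  have hBsupp : Function.support B ⊆ Set.range (fun j : ℕ => m + j) := by
    intro n hn
    by_contra hc
    apply hn
    have hlt : n < m := by
      by_contra hge
      exact hc ⟨n - m, by dsimp only; omega⟩
    simp only [hB, U_eq_zero hlt, mul_zero]
  rw [← hinj.tsum_eq hAsupp, ← hinj.tsum_eq hBsupp]
  unfold evenSeries
  have hsA : Summable (fun c : ℕ => A (m + c)) := hsumA.comp_injective hinj
  have hsB : Summable (fun c : ℕ => B (m + c)) := hsumB.comp_injective hinj
  rw [← Summable.tsum_add hsA hsB]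
  refine tsum_congr fun j => ?_
  have hrho : (lam / mu)⁻¹ = mu / lam := by rw [inv_div]
  rw [innerSum_eq_U, hrho]
  simp only [hA, hB]
  ring

/-! ### Q and its coefficient representation -/

noncomputable def Q (lam mu t : ℝ) (l n : ℤ) : ℝ :=
  if n % 2 = 0 then pEE lam mu t l (n / 2) else pEO lam mu t l ((n - 1) / 2)

noncomputable def coeffQ (lam mu : ℝ) (l n : ℤ) (i : ℕ) : ℝ :=
  if n % 2 = 0 then cE lam mu (n / 2 - l).natAbs i
  else cO lam mu ((n - 1) / 2 - l).natAbs i + cO lam mu ((n - 1) / 2 - l + 1).natAbs i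

lemma psum_add {a b : ℕ → ℝ} {t : ℝ}
    (hA : Summable (fun i => a i * t ^ i / i.factorial))
    (hB : Summable (fun i => b i * t ^ i / i.factorial)) :
    psum (fun i => a i + b i) t = psum a t + psum b t := by
  unfold psum
  rw [← Summable.tsum_add hA hB]
  exact tsum_congr fun i => by ring

lemma coeffQ_bound {lam mu : ℝ} (hlam : 0 < lam) (hmu : 0 < mu) (l n : ℤ) :
    ∀ i, |coeffQ lam mu l n i| ≤ 2 * (lam + mu) ^ i := by
  intro i
  have hp : (0:ℝ) ≤ (lam + mu) ^ i := by positivity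
  unfold coeffQ
  split_ifs with h
  · linarith [cE_bound hlam hmu (n / 2 - l).natAbs i]
  · calc |cO lam mu ((n - 1) / 2 - l).natAbs i + cO lam mu ((n - 1) / 2 - l + 1).natAbs i|
        ≤ |cO lam mu ((n - 1) / 2 - l).natAbs i| + |cO lam mu ((n - 1) / 2 - l + 1).natAbs i| :=
          abs_add_le _ _
      _ ≤ 2 * (lam + mu) ^ i := by
          linarith [cO_bound hlam hmu ((n - 1) / 2 - l).natAbs i,
            cO_bound hlam hmu ((n - 1) / 2 - l + 1).natAbs i]

lemma Q_eq {lam mu : ℝ} (hlam : 0 < lam) (hmu : 0 < mu) (l n : ℤ) (t : ℝ) :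
    Q lam mu t l n = Real.exp (-(lam + mu) * t) * psum (coeffQ lam mu l n) t := by
  unfold Q coeffQ
  by_cases h : n % 2 = 0
  · rw [if_pos h]
    have hco : (fun i => if n % 2 = 0 then cE lam mu (n / 2 - l).natAbs i
        else cO lam mu ((n - 1) / 2 - l).natAbs i + cO lam mu ((n - 1) / 2 - l + 1).natAbs i)
        = fun i => cE lam mu (n / 2 - l).natAbs i := funext fun i => if_pos h
    rw [hco]
    unfold pEE
    rw [evenSeries_eq hlam hmu]
  · rw [if_neg h]
    have hco : (fun i => if n % 2 = 0 then cE lam mu (n / 2 - l).natAbs i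
        else cO lam mu ((n - 1) / 2 - l).natAbs i + cO lam mu ((n - 1) / 2 - l + 1).natAbs i)
        = fun i => cO lam mu ((n - 1) / 2 - l).natAbs i + cO lam mu ((n - 1) / 2 - l + 1).natAbs i :=
      funext fun i => if_neg h
    rw [hco]
    unfold pEO
    rw [oddSeries_eq hlam hmu, oddSeries_eq hlam hmu, psum_add
      (summable_psum (fun i => by rw [one_mul]; exact cO_bound hlam hmu _ i) t)
      (summable_psum (fun i => by rw [one_mul]; exact cO_bound hlam hmu _ i) t)]

lemma U_zero (q : ℝ) (m : ℕ) : U q m 0 = if m = 0 then 1 else 0 := by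
  unfold U
  rcases m with _ | m
  · simp
  · rw [Finset.sum_range_one]
    simp [Nat.choose_eq_zero_of_lt (show 0 < 0 + (m+1) by omega)]

lemma Q_zero {lam mu : ℝ} (hlam : 0 < lam) (hmu : 0 < mu) (l n : ℤ) :
    Q lam mu 0 l n = if n = 2 * l then 1 else 0 := by
  rw [Q_eq hlam hmu, psum_zero, mul_zero, Real.exp_zero, one_mul]
  unfold coeffQ
  by_cases h : n % 2 = 0
  · rw [if_pos h, cE_even (by norm_num : (0:ℕ) % 2 = 0), pow_zero, one_mul,
      show (0:ℕ)/2 = 0 from rfl, U_zero]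
    by_cases h2 : n = 2 * l
    · rw [if_pos (show (n / 2 - l).natAbs = 0 by omega), if_pos h2]
    · rw [if_neg (show ¬(n / 2 - l).natAbs = 0 by omega), if_neg h2]
  · rw [if_neg h, cO_even (by norm_num : (0:ℕ) % 2 = 0),
      cO_even (by norm_num : (0:ℕ) % 2 = 0), if_neg (show ¬n = 2 * l by omega)]
    norm_num

/-! ### Key algebraic identity -/

lemma keyE {lam mu : ℝ} (hlam : 0 < lam) (hmu : 0 < mu) (d : ℤ) (j : ℕ) :
    lam ^ 2 * U (mu / lam) d.natAbs (j + 1) =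
      (mu - lam) ^ 2 * U (mu / lam) d.natAbs j
      + lam * mu * (U (mu / lam) (d - 1).natAbs j + 2 * U (mu / lam) d.natAbs j
        + U (mu / lam) (d + 1).natAbs j) := by
  have hl : lam ≠ 0 := ne_of_gt hlam
  have hq2 : lam ^ 2 * (1 + (mu / lam) ^ 2) = (mu - lam) ^ 2 + 2 * lam * mu := by
    field_simp
    ring
  have hq1 : lam ^ 2 * (mu / lam) = lam * mu := by
    field_simp
  rcases lt_trichotomy d 0 with hd | hd | hd
  · obtain ⟨m, hm1, hm2, hm3⟩ : ∃ m, d.natAbs = m + 1 ∧ (d - 1).natAbs = m + 2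
        ∧ (d + 1).natAbs = m := ⟨(d + 1).natAbs, by omega, by omega, rfl⟩
    rw [hm1, hm2, hm3, U_rec_succ]
    linear_combination U (mu/lam) (m+1) j * hq2
      + (U (mu/lam) m j + U (mu/lam) (m+2) j) * hq1
  · subst hd
    rw [show ((0:ℤ) - 1).natAbs = 1 by rfl, show ((0:ℤ) + 1).natAbs = 1 by rfl,
      show (0:ℤ).natAbs = 0 by rfl, U_rec_zero]
    linear_combination U (mu/lam) 0 j * hq2 + (2 * U (mu/lam) 1 j) * hq1
  · obtain ⟨m, hm1, hm2, hm3⟩ : ∃ m, d.natAbs = m + 1 ∧ (d - 1).natAbs = m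
        ∧ (d + 1).natAbs = m + 2 := ⟨(d - 1).natAbs, by omega, rfl, by omega⟩
    rw [hm1, hm2, hm3, U_rec_succ]
    linear_combination U (mu/lam) (m+1) j * hq2
      + (U (mu/lam) m j + U (mu/lam) (m+2) j) * hq1

/-! ### Coefficient identities -/

lemma coeff_id_even {lam mu : ℝ} (hlam : 0 < lam) (hmu : 0 < mu) (l n : ℤ) (i : ℕ) :
    coeffQ lam mu l (2 * n) (i + 1) =
      (mu - lam) * coeffQ lam mu l (2 * n) i
      + mu * coeffQ lam mu l (2 * n - 1) i + mu * coeffQ lam mu l (2 * n + 1) i := by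
  unfold coeffQ
  rw [if_pos (show (2 * n) % 2 = 0 by omega), if_pos (show (2 * n) % 2 = 0 by omega),
    if_neg (show ¬(2 * n - 1) % 2 = 0 by omega), if_neg (show ¬(2 * n + 1) % 2 = 0 by omega),
    show (2 * n) / 2 = n by omega, show (2 * n - 1 - 1) / 2 = n - 1 by omega,
    show (2 * n + 1 - 1) / 2 = n by omega,
    show n - 1 - l + 1 = n - l by ring, show n - 1 - l = n - l - 1 by ring]
  by_cases hi : i % 2 = 0
  · simp only [cE_odd (show (i + 1) % 2 = 1 by omega), cE_even hi, cO_even hi,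
      Nat.add_sub_cancel, show (i + 1) / 2 = i / 2 by omega]
    ring
  · simp only [cE_even (show (i + 1) % 2 = 0 by omega), cE_odd (show i % 2 = 1 by omega),
      cO_odd (show i % 2 = 1 by omega), show (i + 1) / 2 = i / 2 + 1 by omega]
    have hkey := keyE hlam hmu (n - l) (i / 2)
    have hp1 : lam ^ (i + 1) = lam ^ (i - 1) * lam ^ 2 := by
      rw [← pow_add]; congr 1; omega
    have hp2 : lam ^ i = lam ^ (i - 1) * lam := by
      rw [← pow_succ]; congr 1; omega
    rw [hp1, hp2]
    linear_combination lam ^ (i - 1) * hkey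

lemma coeff_id_odd {lam mu : ℝ} (hlam : 0 < lam) (hmu : 0 < mu) (l n : ℤ) (i : ℕ) :
    coeffQ lam mu l (2 * n + 1) (i + 1) =
      (lam - mu) * coeffQ lam mu l (2 * n + 1) i
      + lam * coeffQ lam mu l (2 * n) i + lam * coeffQ lam mu l (2 * n + 2) i := by
  unfold coeffQ
  rw [if_neg (show ¬(2 * n + 1) % 2 = 0 by omega), if_neg (show ¬(2 * n + 1) % 2 = 0 by omega),
    if_pos (show (2 * n) % 2 = 0 by omega), if_pos (show (2 * n + 2) % 2 = 0 by omega),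
    show (2 * n + 1 - 1) / 2 = n by omega, show (2 * n) / 2 = n by omega,
    show (2 * n + 2) / 2 = n + 1 by omega, show n + 1 - l = n - l + 1 by ring]
  by_cases hi : i % 2 = 0
  · simp only [cO_odd (show (i + 1) % 2 = 1 by omega), cO_even hi, cE_even hi,
      show (i + 1) / 2 = i / 2 by omega, pow_succ]
    ring
  · simp only [cO_even (show (i + 1) % 2 = 0 by omega), cO_odd (show i % 2 = 1 by omega),
      cE_odd (show i % 2 = 1 by omega)]
    have hp2 : lam ^ i = lam ^ (i - 1) * lam := by
      rw [← pow_succ]; congr 1; omega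
    rw [hp2]
    ring

/-! ### Derivative of Q -/

lemma Q_hasDerivAt {lam mu : ℝ} (hlam : 0 < lam) (hmu : 0 < mu) (l n : ℤ) (t : ℝ) :
    HasDerivAt (fun s => Q lam mu s l n)
      (Real.exp (-(lam + mu) * t) * (psum (fun i => coeffQ lam mu l n (i + 1)) t
        - (lam + mu) * psum (coeffQ lam mu l n) t)) t := by
  have hfun : (fun s => Q lam mu s l n)
      = fun s => Real.exp (-(lam + mu) * s) * psum (coeffQ lam mu l n) s :=
    funext fun s => Q_eq hlam hmu l n s
  rw [hfun]
  have h0 : HasDerivAt (fun s : ℝ => -(lam + mu) * s) (-(lam + mu)) t := by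
    simpa using (hasDerivAt_id t).const_mul (-(lam + mu))
  have hexp := h0.exp
  have hp : HasDerivAt (fun s => psum (coeffQ lam mu l n) s)
      (psum (fun i => coeffQ lam mu l n (i + 1)) t) t :=
    hasDerivAt_psum (by positivity : (0:ℝ) ≤ lam + mu) (coeffQ_bound hlam hmu l n) t
  have h2 := hexp.mul hp
  have heq : Real.exp (-(lam + mu) * t) * -(lam + mu) * psum (coeffQ lam mu l n) t
      + Real.exp (-(lam + mu) * t) * psum (fun i => coeffQ lam mu l n (i + 1)) t
      = Real.exp (-(lam + mu) * t) * (psum (fun i => coeffQ lam mu l n (i + 1)) t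
        - (lam + mu) * psum (coeffQ lam mu l n) t) := by ring
  rw [← heq]
  exact h2

lemma Q_fwd_even {lam mu : ℝ} (hlam : 0 < lam) (hmu : 0 < mu) (l n : ℤ) (t : ℝ) :
    HasDerivAt (fun s => Q lam mu s l (2 * n))
      (mu * Q lam mu t l (2 * n - 1) - 2 * lam * Q lam mu t l (2 * n)
        + mu * Q lam mu t l (2 * n + 1)) t := by
  have h := Q_hasDerivAt hlam hmu l (2 * n) t
  have s0 : Summable (fun i => coeffQ lam mu l (2 * n) i * t ^ i / i.factorial) :=
    summable_psum (coeffQ_bound hlam hmu l (2 * n)) t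
  have s1 : Summable (fun i => coeffQ lam mu l (2 * n - 1) i * t ^ i / i.factorial) :=
    summable_psum (coeffQ_bound hlam hmu l (2 * n - 1)) t
  have s2 : Summable (fun i => coeffQ lam mu l (2 * n + 1) i * t ^ i / i.factorial) :=
    summable_psum (coeffQ_bound hlam hmu l (2 * n + 1)) t
  have hps : psum (fun i => coeffQ lam mu l (2 * n) (i + 1)) t
      = (mu - lam) * psum (coeffQ lam mu l (2 * n)) t
        + mu * psum (coeffQ lam mu l (2 * n - 1)) t
        + mu * psum (coeffQ lam mu l (2 * n + 1)) t := by
    unfold psum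
    rw [← tsum_mul_left, ← tsum_mul_left, ← tsum_mul_left,
      ← Summable.tsum_add (s0.mul_left _) (s1.mul_left _),
      ← Summable.tsum_add ((s0.mul_left _).add (s1.mul_left _)) (s2.mul_left _)]
    exact tsum_congr fun i => by simp only [coeff_id_even hlam hmu l n i]; ring
  have hval : Real.exp (-(lam + mu) * t) * (psum (fun i => coeffQ lam mu l (2 * n) (i + 1)) t
        - (lam + mu) * psum (coeffQ lam mu l (2 * n)) t)
      = mu * Q lam mu t l (2 * n - 1) - 2 * lam * Q lam mu t l (2 * n)
        + mu * Q lam mu t l (2 * n + 1) := by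
    rw [hps, Q_eq hlam hmu, Q_eq hlam hmu, Q_eq hlam hmu]
    ring
  rw [← hval]
  exact h

lemma Q_fwd_odd {lam mu : ℝ} (hlam : 0 < lam) (hmu : 0 < mu) (l n : ℤ) (t : ℝ) :
    HasDerivAt (fun s => Q lam mu s l (2 * n + 1))
      (lam * Q lam mu t l (2 * n) - 2 * mu * Q lam mu t l (2 * n + 1)
        + lam * Q lam mu t l (2 * n + 2)) t := by
  have h := Q_hasDerivAt hlam hmu l (2 * n + 1) t
  have s0 : Summable (fun i => coeffQ lam mu l (2 * n + 1) i * t ^ i / i.factorial) :=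
    summable_psum (coeffQ_bound hlam hmu l (2 * n + 1)) t
  have s1 : Summable (fun i => coeffQ lam mu l (2 * n) i * t ^ i / i.factorial) :=
    summable_psum (coeffQ_bound hlam hmu l (2 * n)) t
  have s2 : Summable (fun i => coeffQ lam mu l (2 * n + 2) i * t ^ i / i.factorial) :=
    summable_psum (coeffQ_bound hlam hmu l (2 * n + 2)) t
  have hps : psum (fun i => coeffQ lam mu l (2 * n + 1) (i + 1)) t
      = (lam - mu) * psum (coeffQ lam mu l (2 * n + 1)) t
        + lam * psum (coeffQ lam mu l (2 * n)) t
        + lam * psum (coeffQ lam mu l (2 * n + 2)) t := by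
    unfold psum
    rw [← tsum_mul_left, ← tsum_mul_left, ← tsum_mul_left,
      ← Summable.tsum_add (s0.mul_left _) (s1.mul_left _),
      ← Summable.tsum_add ((s0.mul_left _).add (s1.mul_left _)) (s2.mul_left _)]
    exact tsum_congr fun i => by simp only [coeff_id_odd hlam hmu l n i]; ring
  have hval : Real.exp (-(lam + mu) * t) * (psum (fun i => coeffQ lam mu l (2 * n + 1) (i + 1)) t
        - (lam + mu) * psum (coeffQ lam mu l (2 * n + 1)) t)
      = lam * Q lam mu t l (2 * n) - 2 * mu * Q lam mu t l (2 * n + 1)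
        + lam * Q lam mu t l (2 * n + 2) := by
    rw [hps, Q_eq hlam hmu, Q_eq hlam hmu, Q_eq hlam hmu]
    ring
  rw [← hval]
  exact h

/-! ### Relating transP to Q -/

lemma pOE_eq (lam mu t : ℝ) (l r : ℤ) : pOE lam mu t l r = pEO mu lam t l (r - 1) := by
  unfold pOE pEO
  rw [show r - 1 - l = r - l - 1 by ring, show r - l - 1 + 1 = r - l by ring,
    show -(mu + lam) = -(lam + mu) by ring]

lemma pOO_eq (lam mu t : ℝ) (l r : ℤ) : pOO lam mu t l r = pEE mu lam t l r := by
  unfold pOO pEE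
  rw [show -(mu + lam) = -(lam + mu) by ring]

lemma transP_even {lam mu t : ℝ} {k : ℤ} (hk : k % 2 = 0) (n : ℤ) :
    transP lam mu t k n = Q lam mu t (k / 2) n := by
  unfold transP Q
  rw [if_pos hk]

lemma transP_odd {lam mu t : ℝ} {k : ℤ} (hk : k % 2 = 1) (n : ℤ) :
    transP lam mu t k n = Q mu lam t ((k - 1) / 2) (n - 1) := by
  unfold transP Q
  rw [if_neg (show ¬k % 2 = 0 by omega)]
  by_cases hn : n % 2 = 0
  · rw [if_pos hn, if_neg (show ¬(n - 1) % 2 = 0 by omega), pOE_eq]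
    congr 1
    omega
  · rw [if_neg hn, if_pos (show (n - 1) % 2 = 0 by omega), pOO_eq]

lemma hderiv_within {f : ℝ → ℝ} {d t : ℝ} (ht : (0:ℝ) ≤ t) (h : HasDerivAt f d t) :
    derivWithin f (Set.Ici 0) t = d :=
  h.hasDerivWithinAt.derivWithin (uniqueDiffOn_Ici 0 t ht)

/-- The transition probabilities are differentiable on `[0,∞)`, satisfy the Kronecker-delta
initial condition, and satisfy the Kolmogorov forward equations. -/
theorem forward_equations (lam mu : ℝ) (hlam : 0 < lam) (hmu : 0 < mu) (k : ℤ) :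
    (∀ n : ℤ, DifferentiableOn ℝ (fun t : ℝ => transP lam mu t k n) (Set.Ici 0)) ∧
    (∀ n : ℤ, transP lam mu 0 k n = if n = k then 1 else 0) ∧
    (∀ t : ℝ, 0 ≤ t → ∀ n : ℤ,
      derivWithin (fun s : ℝ => transP lam mu s k (2 * n)) (Set.Ici 0) t =
        mu * transP lam mu t k (2 * n - 1) - 2 * lam * transP lam mu t k (2 * n) +
          mu * transP lam mu t k (2 * n + 1) ∧
      derivWithin (fun s : ℝ => transP lam mu s k (2 * n + 1)) (Set.Ici 0) t =
        lam * transP lam mu t k (2 * n) - 2 * mu * transP lam mu t k (2 * n + 1) +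
          lam * transP lam mu t k (2 * n + 2)) := by
  have hk2 : k % 2 = 0 ∨ k % 2 = 1 := by omega
  rcases hk2 with hk | hk
  · -- even starting state
    refine ⟨fun n => ?_, fun n => ?_, fun t ht n => ⟨?_, ?_⟩⟩
    · intro x hx
      have hfun : (fun t => transP lam mu t k n) = fun t => Q lam mu t (k / 2) n :=
        funext fun t => transP_even hk n
      rw [hfun]
      exact (Q_hasDerivAt hlam hmu (k / 2) n x).differentiableAt.differentiableWithinAt
    · rw [transP_even hk n, Q_zero hlam hmu]
      by_cases h : n = k
      · rw [if_pos (by omega), if_pos h]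
      · rw [if_neg (by omega), if_neg h]
    · have hfun : (fun s => transP lam mu s k (2 * n)) = fun s => Q lam mu s (k / 2) (2 * n) :=
        funext fun s => transP_even hk (2 * n)
      rw [hfun, hderiv_within ht (Q_fwd_even hlam hmu (k / 2) n t),
        transP_even hk (2 * n - 1), transP_even hk (2 * n), transP_even hk (2 * n + 1)]
    · have hfun : (fun s => transP lam mu s k (2 * n + 1))
          = fun s => Q lam mu s (k / 2) (2 * n + 1) :=
        funext fun s => transP_even hk (2 * n + 1)
      rw [hfun, hderiv_within ht (Q_fwd_odd hlam hmu (k / 2) n t),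
        transP_even hk (2 * n), transP_even hk (2 * n + 1), transP_even hk (2 * n + 2)]
  · -- odd starting state
    refine ⟨fun n => ?_, fun n => ?_, fun t ht n => ⟨?_, ?_⟩⟩
    · intro x hx
      have hfun : (fun t => transP lam mu t k n) = fun t => Q mu lam t ((k - 1) / 2) (n - 1) :=
        funext fun t => transP_odd hk n
      rw [hfun]
      exact (Q_hasDerivAt hmu hlam ((k - 1) / 2) (n - 1) x).differentiableAt.differentiableWithinAt
    · rw [transP_odd hk n, Q_zero hmu hlam]
      by_cases h : n = k
      · rw [if_pos (by omega), if_pos h]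
      · rw [if_neg (by omega), if_neg h]
    · have hfun : (fun s => transP lam mu s k (2 * n))
          = fun s => Q mu lam s ((k - 1) / 2) (2 * (n - 1) + 1) :=
        funext fun s => by rw [transP_odd hk (2 * n)]; congr 1; ring
      rw [hfun, hderiv_within ht (Q_fwd_odd hmu hlam ((k - 1) / 2) (n - 1) t),
        transP_odd hk (2 * n - 1), transP_odd hk (2 * n), transP_odd hk (2 * n + 1),
        show (2 * n - 1 - 1 : ℤ) = 2 * (n - 1) by ring,
        show (2 * n - 1 : ℤ) = 2 * (n - 1) + 1 by ring,
        show (2 * n + 1 - 1 : ℤ) = 2 * (n - 1) + 2 by ring]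
    · have hfun : (fun s => transP lam mu s k (2 * n + 1))
          = fun s => Q mu lam s ((k - 1) / 2) (2 * n) :=
        funext fun s => by rw [transP_odd hk (2 * n + 1)]; congr 1; ring
      rw [hfun, hderiv_within ht (Q_fwd_even hmu hlam ((k - 1) / 2) n t),
        transP_odd hk (2 * n), transP_odd hk (2 * n + 1), transP_odd hk (2 * n + 2),
        show (2 * n - 1 : ℤ) = 2 * n - 1 by ring,
        show (2 * n + 1 - 1 : ℤ) = 2 * n by ring,
        show (2 * n + 2 - 1 : ℤ) = 2 * n + 1 by ring]
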